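/- arXiv:1001.2952 — 2 statements merged into one kernel-verified Lean document; each statement's English description precedes it below -/
import Mathlib

section
/- (Theorem 2, backward direction.) Let k ≥ 1, let a₁, …, a_k and C be nonzero integers, 0 < ε ≤ 1/(4 Σᵢ |aᵢ|), P ≥ 2k/ε², and let f : ℝ^{2k} → ℝ be f(x) = (C - Σ_{i=1}^k aᵢ xᵢ)² + P · Σ_{i=1}^k (1 - xᵢ - x_{i+k})² + Σ_{i=1}^{2k} min(1, xᵢ²/ε²). If no subset S ⊆ {1, …, k} satisfies Σ_{i∈S} aᵢ = C, then f(x) ≥ k + 1/4 for every x ∈ ℝ^{2k}. -/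
open BigOperators Finset

/-- The inclusion `{1, …, k} → {1, …, 2k}`, `i ↦ i`. -/
def lo (k : ℕ) (i : Fin k) : Fin (2 * k) :=
  ⟨i.1, by have := i.2; omega⟩

/-- The shifted inclusion `{1, …, k} → {1, …, 2k}`, `i ↦ i + k`. -/
def hi (k : ℕ) (i : Fin k) : Fin (2 * k) :=
  ⟨i.1 + k, by have := i.2; omega⟩

/-- The objective function of Theorem 2:
`f(x) = (C - Σᵢ aᵢ xᵢ)² + P·Σᵢ (1 - xᵢ - x_{i+k})² + Σᵢ min(1, xᵢ²/ε²)`. -/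
noncomputable def ffun (k : ℕ) (a : Fin k → ℤ) (C : ℤ) (P ε : ℝ)
    (x : Fin (2 * k) → ℝ) : ℝ :=
  ((C : ℝ) - ∑ i : Fin k, (a i : ℝ) * x (lo k i)) ^ 2
    + P * ∑ i : Fin k, (1 - x (lo k i) - x (hi k i)) ^ 2
    + ∑ i : Fin (2 * k), min 1 (x i ^ 2 / ε ^ 2)

lemma sum_split {k : ℕ} (g : Fin (2*k) → ℝ) :
    ∑ i : Fin (2*k), g i = ∑ i : Fin k, g (lo k i) + ∑ i : Fin k, g (hi k i) := by
  rw [show (∑ i : Fin (2*k), g i)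
      = ∑ i : Fin (k+k), g (finCongr (two_mul k).symm i) from
    (Fintype.sum_equiv (finCongr (two_mul k).symm) _ _ fun i => rfl).symm,
    Fin.sum_univ_add]
  congr 1 <;>
    exact Finset.sum_congr rfl fun i _ =>
      congrArg g (Fin.ext (by simp only [lo, hi, finCongr_apply, Fin.coe_cast,
        Fin.coe_castAdd, Fin.coe_natAdd]; omega))



set_option maxHeartbeats 1600000 in
/-- Theorem 2, backward direction: if no subset `S ⊆ {1, …, k}` satisfies
`Σ_{i∈S} aᵢ = C`, then `f(x) ≥ k + 1/4` for every `x`. -/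
theorem ffun_ge_of_no_goodSubset
    (k : ℕ) (hk : 1 ≤ k) (a : Fin k → ℤ) (C : ℤ)
    (ha : ∀ i, a i ≠ 0) (hC : C ≠ 0) (ε P : ℝ)
    (hε : 0 < ε) (hε' : ε ≤ 1 / (4 * ∑ i, |(a i : ℝ)|)) (hP : 2 * k / ε ^ 2 ≤ P)
    (hno : ¬ ∃ S : Finset (Fin k), ∑ i ∈ S, a i = C) :
    ∀ x : Fin (2 * k) → ℝ, (k : ℝ) + 1 / 4 ≤ ffun k a C P ε x := by
  intro x
  have hk1 : (1 : ℝ) ≤ (k : ℝ) := by exact_mod_cast hk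
  set A : ℝ := ∑ i, |(a i : ℝ)| with hAdef
  have hA1 : (k : ℝ) ≤ A := by
    calc (k : ℝ) = ∑ _i : Fin k, (1 : ℝ) := by simp
    _ ≤ A := Finset.sum_le_sum fun i _ => by
        have h1 : (1 : ℤ) ≤ |a i| := Int.one_le_abs (ha i)
        calc (1:ℝ) = ((1:ℤ):ℝ) := by norm_num
        _ ≤ ((|a i| : ℤ) : ℝ) := by exact_mod_cast h1
        _ = |(a i : ℝ)| := by push_cast; ring
  have hApos : (0 : ℝ) < A := lt_of_lt_of_le (by linarith) hA1
  have hAε : 4 * A * ε ≤ 1 := by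
    rw [le_div_iff₀ (by positivity)] at hε'; linarith
  have hε4 : ε ≤ 1 / 4 := by nlinarith
  have hPe : 2 * (k : ℝ) ≤ P * ε ^ 2 := by
    rw [div_le_iff₀ (by positivity)] at hP; linarith
  have hPpos : (0 : ℝ) < P := by nlinarith
  unfold ffun
  set T : ℝ := ∑ i : Fin k, (a i : ℝ) * x (lo k i) with hTdef
  set Q : ℝ := ((C : ℝ) - T) ^ 2 with hQdef
  set Rs : ℝ := ∑ i : Fin k, (1 - x (lo k i) - x (hi k i)) ^ 2 with hRdef
  set M : ℝ := ∑ i : Fin (2 * k), min 1 (x i ^ 2 / ε ^ 2) with hMdef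
  have hQ0 : 0 ≤ Q := sq_nonneg _
  have hRs0 : 0 ≤ Rs := Finset.sum_nonneg fun i _ => sq_nonneg _
  have hmin0 : ∀ i : Fin (2*k), 0 ≤ min 1 (x i ^ 2 / ε ^ 2) := fun i =>
    le_min (by norm_num) (by positivity)
  have hM0 : 0 ≤ M := Finset.sum_nonneg fun i _ => hmin0 i
  clear_value A T Q Rs M
  have hbigmin : ∀ i : Fin (2*k), ε ≤ |x i| → min 1 (x i ^ 2 / ε ^ 2) = 1 := by
    intro i h
    refine min_eq_left ?_
    rw [le_div_iff₀ (by positivity)]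
    nlinarith [sq_abs (x i), abs_nonneg (x i)]
  by_cases hcaseA : ∃ i : Fin k, |x (lo k i)| < ε ∧ |x (hi k i)| < ε
  · -- some pair has both coordinates small: huge penalty
    obtain ⟨i, h1, h2⟩ := hcaseA
    obtain ⟨h1a, h1b⟩ := abs_lt.mp h1
    obtain ⟨h2a, h2b⟩ := abs_lt.mp h2
    have hterm : (1/4 : ℝ) ≤ (1 - x (lo k i) - x (hi k i)) ^ 2 := by nlinarith
    have hRs : (1/4 : ℝ) ≤ Rs := by
      have h1 : (1 - x (lo k i) - x (hi k i)) ^ 2 ≤ Rs := by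
        rw [hRdef]
        exact Finset.single_le_sum (fun j _ => sq_nonneg (1 - x (lo k j) - x (hi k j))) (mem_univ i)
      linarith
    have he2 : ε ^ 2 ≤ 1/16 := by nlinarith
    have hP32 : 32 * (k : ℝ) ≤ P := by
      have h16 := mul_le_mul_of_nonneg_left he2 hPpos.le
      linarith
    have : 32 * (k : ℝ) * (1/4) ≤ P * Rs := mul_le_mul hP32 hRs (by norm_num) hPpos.le
    linarith
  · push_neg at hcaseA
    -- every pair has a big coordinate, so M ≥ k
    have hpair : ∀ i : Fin k,
        (1:ℝ) ≤ min 1 (x (lo k i) ^ 2 / ε ^ 2) + min 1 (x (hi k i) ^ 2 / ε ^ 2) := by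
      intro i
      by_cases h : ε ≤ |x (lo k i)|
      · rw [hbigmin _ h]; linarith [hmin0 (hi k i)]
      · rw [hbigmin _ (hcaseA i (not_le.mp h))]; linarith [hmin0 (lo k i)]
    have hMk : (k : ℝ) ≤ M := by
      rw [hMdef, sum_split]
      calc (k:ℝ) = ∑ _i : Fin k, (1:ℝ) := by simp
      _ ≤ _ := by rw [← Finset.sum_add_distrib]; exact Finset.sum_le_sum fun i _ => hpair i
    by_cases hQc : 1/4 ≤ Q
    · linarith [mul_nonneg hPpos.le hRs0]
    by_cases hPRc : 1/4 ≤ P * Rs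
    · linarith
    by_cases hboth : ∃ i : Fin k, ε ≤ |x (lo k i)| ∧ ε ≤ |x (hi k i)|
    · -- some pair has both big: M ≥ k + 1
      obtain ⟨i0, hb1, hb2⟩ := hboth
      have hMk1 : (k : ℝ) + 1 ≤ M := by
        rw [hMdef, sum_split]
        have step : ∀ i : Fin k, (1:ℝ) + (if i = i0 then (1:ℝ) else 0)
            ≤ min 1 (x (lo k i) ^ 2 / ε ^ 2) + min 1 (x (hi k i) ^ 2 / ε ^ 2) := by
          intro i
          by_cases h : i = i0
          · subst h; rw [hbigmin _ hb1, hbigmin _ hb2]; simp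
          · simp only [h, if_false, add_zero]; exact hpair i
        calc (k:ℝ) + 1 = ∑ i : Fin k, ((1:ℝ) + (if i = i0 then (1:ℝ) else 0)) := by
              rw [Finset.sum_add_distrib]; simp
        _ ≤ ∑ i : Fin k, (min 1 (x (lo k i) ^ 2 / ε ^ 2) + min 1 (x (hi k i) ^ 2 / ε ^ 2)) :=
              Finset.sum_le_sum fun i _ => step i
        _ = _ := Finset.sum_add_distrib
      linarith [mul_nonneg hPpos.le hRs0]
    · push_neg at hboth
      exfalso
      push_neg at hQc hPRc
      have habs1 : |(C : ℝ) - T| < 1/2 := by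
        have h := hQc; rw [hQdef] at h
        rw [abs_lt]; constructor <;> nlinarith [h]
      -- each coupling error is at most ε/2
      have hδ : ∀ i : Fin k, |1 - x (lo k i) - x (hi k i)| ≤ ε / 2 := by
        intro i
        have h1 : (1 - x (lo k i) - x (hi k i)) ^ 2 ≤ Rs := by
          rw [hRdef]
          exact Finset.single_le_sum (fun j _ => sq_nonneg (1 - x (lo k j) - x (hi k j))) (mem_univ i)
        have h2 : P * (1 - x (lo k i) - x (hi k i)) ^ 2 < 1/4 := by nlinarith
        refine abs_le_of_sq_le_sq ?_ (by positivity)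
        -- (δ)^2 ≤ (ε/2)^2 since P δ² < 1/4 and P ε² ≥ 2k ≥ 2
        nlinarith [sq_nonneg (1 - x (lo k i) - x (hi k i))]
      set s : Fin k → ℝ := fun i => if ε ≤ |x (lo k i)| then (1:ℝ) else 0 with hsdef
      have herr : ∀ i : Fin k, |x (lo k i) - s i| ≤ 3 * ε / 2 := by
        intro i
        by_cases h : ε ≤ |x (lo k i)|
        · have hhi : |x (hi k i)| < ε := hboth i h
          obtain ⟨e1, e2⟩ := abs_lt.mp hhi
          obtain ⟨d1, d2⟩ := abs_le.mp (hδ i)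
          simp only [hsdef, h, if_true]
          rw [abs_le]; constructor <;> nlinarith
        · simp only [hsdef, h, if_false, sub_zero]
          linarith [not_le.mp h, abs_nonneg (x (lo k i))]
      have hsum : |T - ∑ i : Fin k, (a i : ℝ) * s i| ≤ 3/8 := by
        have e1 : T - ∑ i : Fin k, (a i : ℝ) * s i
            = ∑ i : Fin k, (a i : ℝ) * (x (lo k i) - s i) := by
          rw [hTdef, ← Finset.sum_sub_distrib]
          exact Finset.sum_congr rfl fun i _ => by ring
        rw [e1]
        calc |∑ i : Fin k, (a i : ℝ) * (x (lo k i) - s i)|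
            ≤ ∑ i : Fin k, |(a i : ℝ) * (x (lo k i) - s i)| := Finset.abs_sum_le_sum_abs _ _
        _ ≤ ∑ i : Fin k, |(a i : ℝ)| * (3 * ε / 2) := Finset.sum_le_sum fun i _ => by
              rw [abs_mul]
              exact mul_le_mul_of_nonneg_left (herr i) (abs_nonneg _)
        _ = A * (3 * ε / 2) := by rw [← Finset.sum_mul, ← hAdef]
        _ ≤ 3/8 := by nlinarith
      set S : Finset (Fin k) := univ.filter (fun i => ε ≤ |x (lo k i)|) with hSdef
      have hSsum : ∑ i : Fin k, (a i : ℝ) * s i = ((∑ i ∈ S, a i : ℤ) : ℝ) := by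
        rw [hSdef, Int.cast_sum, Finset.sum_filter]
        exact Finset.sum_congr rfl fun i _ => by
          simp only [hsdef]; split <;> simp
      have hfin : |((C - ∑ i ∈ S, a i : ℤ) : ℝ)| < 1 := by
        push_cast
        have e2 : (C:ℝ) - ((∑ i ∈ S, a i : ℤ) : ℝ)
            = ((C:ℝ) - T) + (T - ∑ i : Fin k, (a i : ℝ) * s i) := by rw [hSsum]; ring
        push_cast at e2
        rw [e2]
        calc |_ + _| ≤ |(C:ℝ) - T| + |T - ∑ i : Fin k, (a i : ℝ) * s i| := abs_add_le _ _
        _ < 1 := by linarith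
      have hz : (C - ∑ i ∈ S, a i : ℤ) = 0 := by
        rw [← Int.abs_lt_one_iff]
        exact_mod_cast (by rwa [← Int.cast_abs] at hfin : ((|C - ∑ i ∈ S, a i| : ℤ) : ℝ) < 1)
      exact hno ⟨S, by omega⟩
end

section
/- (ℓ₀ version of Theorem 2.) Let k ≥ 1, let a₁, …, a_k and C be nonzero integers, let ε = 1/(4 Σᵢ |aᵢ|) and P ≥ 2k/ε², and define g : ℝ^{2k} → ℝ by g(x) = (C - Σ_{i=1}^k aᵢ xᵢ)² + P · Σ_{i=1}^k (1 - xᵢ - x_{i+k})² + ‖x‖₀, where ‖x‖₀ = #{i : xᵢ ≠ 0} is the counting 'norm'. Then there exists a subset S ⊆ {1, …, k} with Σ_{i∈S} aᵢ = C if and only if there exists x ∈ ℝ^{2k} with g(x) ≤ k; moreover, if no such subset exists, then g(x) ≥ k + 1/4 for all x ∈ ℝ^{2k}. -/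
open BigOperators Finset

/-- The `ℓ₀`-regularized objective:
`g(x) = (C - Σᵢ aᵢ xᵢ)² + P·Σᵢ (1 - xᵢ - x_{i+k})² + ‖x‖₀`, where
`‖x‖₀ = #{i : xᵢ ≠ 0}` is the counting "norm". -/
noncomputable def gzero (k : ℕ) (a : Fin k → ℤ) (C : ℤ) (P : ℝ)
    (x : Fin (2 * k) → ℝ) : ℝ :=
  ((C : ℝ) - ∑ i : Fin k, (a i : ℝ) * x (lo k i)) ^ 2
    + P * ∑ i : Fin k, (1 - x (lo k i) - x (hi k i)) ^ 2
    + ∑ i : Fin (2 * k), (if x i = 0 then (0 : ℝ) else 1)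

/-- Splitting a sum over `Fin (2k)` into the low and high halves. -/
lemma sum_split_lo_hi (k : ℕ) (f : Fin (2 * k) → ℝ) :
    ∑ i : Fin (2 * k), f i = ∑ i : Fin k, f (lo k i) + ∑ i : Fin k, f (hi k i) := by
  have h : ∑ i : Fin (k + k), f (Fin.cast (by ring) i) = ∑ i : Fin (2 * k), f i :=
    Fintype.sum_equiv (finCongr (by ring)) _ _ (fun _ => rfl)
  rw [← h, Fin.sum_univ_add]
  refine congrArg₂ (· + ·) (Finset.sum_congr rfl fun i _ => ?_)
    (Finset.sum_congr rfl fun i _ => ?_)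
  · exact congrArg f (Fin.ext rfl)
  · exact congrArg f (Fin.ext (Nat.add_comm k i.1))

set_option maxHeartbeats 1000000 in
/-- `ℓ₀` version of Theorem 2: with `ε = 1/(4 Σᵢ |aᵢ|)` and `P ≥ 2k/ε²`, a good
subset exists iff some `x` has `g(x) ≤ k`; and if no good subset exists then
`g(x) ≥ k + 1/4` for all `x`. -/
theorem ell_zero_theorem_two
    (k : ℕ) (hk : 1 ≤ k) (a : Fin k → ℤ) (C : ℤ)
    (ha : ∀ i, a i ≠ 0) (hC : C ≠ 0) (ε P : ℝ)
    (hε : ε = 1 / (4 * ∑ i, |(a i : ℝ)|)) (hP : 2 * k / ε ^ 2 ≤ P) :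
    ((∃ S : Finset (Fin k), ∑ i ∈ S, a i = C)
        ↔ ∃ x : Fin (2 * k) → ℝ, gzero k a C P x ≤ k)
      ∧ ((¬ ∃ S : Finset (Fin k), ∑ i ∈ S, a i = C)
        → ∀ x : Fin (2 * k) → ℝ, (k : ℝ) + 1 / 4 ≤ gzero k a C P x) := by
  classical
  -- basic facts about ε and P
  set A : ℝ := ∑ i, |(a i : ℝ)| with hA_def
  have hA1 : (1 : ℝ) ≤ A := by
    have h0 : (1 : ℝ) ≤ |(a ⟨0, hk⟩ : ℝ)| := by
      have := Int.one_le_abs (ha ⟨0, hk⟩)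
      calc (1 : ℝ) = ((1 : ℤ) : ℝ) := by norm_num
        _ ≤ ((|a ⟨0, hk⟩| : ℤ) : ℝ) := by exact_mod_cast this
        _ = |(a ⟨0, hk⟩ : ℝ)| := by push_cast; ring
    exact le_trans h0 (Finset.single_le_sum (f := fun i => |(a i : ℝ)|)
      (fun i _ => abs_nonneg _) (Finset.mem_univ _))
  have hApos : (0 : ℝ) < A := lt_of_lt_of_le one_pos hA1
  have hεpos : 0 < ε := by rw [hε]; positivity
  have hεle : ε ≤ 1 / 4 := by
    rw [hε]
    rw [div_le_div_iff₀ (by positivity) (by norm_num)]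
    linarith
  have hεA : ε * A = 1 / 4 := by
    rw [hε]; field_simp
  have hε2 : ε ^ 2 ≤ 1 / 16 := by nlinarith
  have hk1 : (1 : ℝ) ≤ (k : ℝ) := by exact_mod_cast hk
  have hPbig : 32 * (k : ℝ) ≤ P := by
    refine le_trans ?_ hP
    rw [le_div_iff₀ (by positivity)]
    nlinarith [mul_le_mul_of_nonneg_left hε2 (by positivity : (0:ℝ) ≤ 32 * (k:ℝ))]
  have hPpos : 0 < P := by nlinarith
  -- the key lower bound in the "no good subset" case
  have key : (¬ ∃ S : Finset (Fin k), ∑ i ∈ S, a i = C) →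
      ∀ x : Fin (2 * k) → ℝ, (k : ℝ) + 1 / 4 ≤ gzero k a C P x := by
    intro hno x
    have hT1 : 0 ≤ ((C : ℝ) - ∑ i : Fin k, (a i : ℝ) * x (lo k i)) ^ 2 := sq_nonneg _
    have hpen : 0 ≤ ∑ i : Fin k, (1 - x (lo k i) - x (hi k i)) ^ 2 :=
      Finset.sum_nonneg fun i _ => sq_nonneg _
    have hT2 : 0 ≤ P * ∑ i : Fin k, (1 - x (lo k i) - x (hi k i)) ^ 2 :=
      mul_nonneg hPpos.le hpen
    have hT3 : 0 ≤ ∑ i : Fin (2 * k), (if x i = 0 then (0 : ℝ) else 1) :=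
      Finset.sum_nonneg fun i _ => by split <;> norm_num
    by_cases hzz : ∃ i : Fin k, x (lo k i) = 0 ∧ x (hi k i) = 0
    · -- some pair is entirely zero: the penalty term alone is huge
      obtain ⟨i, hl, hh⟩ := hzz
      have h1 : (1 : ℝ) ≤ ∑ i : Fin k, (1 - x (lo k i) - x (hi k i)) ^ 2 := by
        have := Finset.single_le_sum (f := fun j => (1 - x (lo k j) - x (hi k j)) ^ 2)
          (fun j _ => sq_nonneg _) (Finset.mem_univ i)
        simpa [hl, hh] using this
      have : P ≤ P * ∑ i : Fin k, (1 - x (lo k i) - x (hi k i)) ^ 2 := by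
        nlinarith
      unfold gzero
      nlinarith
    · push_neg at hzz
      -- every pair has a nonzero coordinate, so the ℓ₀ term is ≥ k
      have hsplit := sum_split_lo_hi k (fun i => if x i = 0 then (0 : ℝ) else 1)
      by_cases hbb : ∃ i : Fin k, x (lo k i) ≠ 0 ∧ x (hi k i) ≠ 0
      · -- some pair doubly nonzero: ℓ₀ term ≥ k + 1
        obtain ⟨i0, hl0, hh0⟩ := hbb
        have hbound : (k : ℝ) + 1 ≤ ∑ i : Fin (2 * k), (if x i = 0 then (0 : ℝ) else 1) := by
          rw [hsplit, ← Finset.sum_add_distrib]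
          have hge : ∀ i ∈ (Finset.univ : Finset (Fin k)),
              (if i = i0 then (2 : ℝ) else 1) ≤
                ((if x (lo k i) = 0 then (0 : ℝ) else 1) +
                  (if x (hi k i) = 0 then (0 : ℝ) else 1)) := by
            intro i _
            by_cases hii : i = i0
            · subst hii; rw [if_pos rfl, if_neg hl0, if_neg hh0]; norm_num
            · rw [if_neg hii]
              by_cases hl : x (lo k i) = 0
              · have hh := hzz i hl
                rw [if_neg hh]
                split <;> norm_num
              · rw [if_neg hl]
                split <;> norm_num
          have := Finset.sum_le_sum hge
          have hsum2 : ∑ i : Fin k, (if i = i0 then (2 : ℝ) else 1) = (k : ℝ) + 1 := by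
            have he : ∀ i : Fin k, (if i = i0 then (2 : ℝ) else 1)
                = 1 + (if i = i0 then (1 : ℝ) else 0) := by
              intro i; split <;> norm_num
            simp_rw [he, Finset.sum_add_distrib, Finset.sum_ite_eq' Finset.univ i0]
            simp
          linarith [hsum2 ▸ this]
        unfold gzero
        nlinarith
      · push_neg at hbb
        -- exactly one of each pair is nonzero: ℓ₀ term ≥ k, show T1 + T2 ≥ 1/4
        have hT3k : (k : ℝ) ≤ ∑ i : Fin (2 * k), (if x i = 0 then (0 : ℝ) else 1) := by
          rw [hsplit, ← Finset.sum_add_distrib]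
          have hge : ∀ i ∈ (Finset.univ : Finset (Fin k)),
              (1 : ℝ) ≤ ((if x (lo k i) = 0 then (0 : ℝ) else 1) +
                (if x (hi k i) = 0 then (0 : ℝ) else 1)) := by
            intro i _
            by_cases hl : x (lo k i) = 0
            · have hh := hzz i hl
              rw [if_neg hh]; split <;> norm_num
            · rw [if_neg hl]; split <;> norm_num
          have := Finset.sum_le_sum hge
          simpa using this
        by_cases hT2big : 1 / 4 ≤ P * ∑ i : Fin k, (1 - x (lo k i) - x (hi k i)) ^ 2
        · unfold gzero; linarith
        · push_neg at hT2big
          -- each penalty term is small, so each x (lo i) is near its intended value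
          have hterm : ∀ i : Fin k, (1 - x (lo k i) - x (hi k i)) ^ 2 ≤ ε ^ 2 := by
            intro i
            have h1 : (1 - x (lo k i) - x (hi k i)) ^ 2 ≤
                ∑ j : Fin k, (1 - x (lo k j) - x (hi k j)) ^ 2 :=
              Finset.single_le_sum (f := fun j => (1 - x (lo k j) - x (hi k j)) ^ 2)
                (fun j _ => sq_nonneg _) (Finset.mem_univ i)
            have h2 : P * (1 - x (lo k i) - x (hi k i)) ^ 2 ≤ 1 / 4 := by nlinarith
            have h3 : (2 : ℝ) / ε ^ 2 ≤ P := by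
              refine le_trans ?_ hP
              rw [div_le_div_iff₀ (by positivity) (by positivity)]
              nlinarith
            have h4 : 2 ≤ P * ε ^ 2 := by
              rw [div_le_iff₀ (by positivity)] at h3
              linarith
            by_contra hgt
            push_neg at hgt
            have h5 : P * ε ^ 2 ≤ P * (1 - x (lo k i) - x (hi k i)) ^ 2 :=
              mul_le_mul_of_nonneg_left hgt.le hPpos.le
            linarith
          set S : Finset (Fin k) := Finset.univ.filter (fun i => x (lo k i) ≠ 0) with hS_def
          have hSnear : ∀ i ∈ S, |1 - x (lo k i)| ≤ ε := by
            intro i hi'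
            have hxl : x (lo k i) ≠ 0 := (Finset.mem_filter.mp hi').2
            have hxh : x (hi k i) = 0 := hbb i hxl
            have := hterm i
            rw [hxh] at this
            rw [abs_le]
            constructor <;> nlinarith
          have hDne : C - ∑ i ∈ S, a i ≠ 0 := by
            intro h
            exact hno ⟨S, by omega⟩
          have hD1 : (1 : ℝ) ≤ |(C : ℝ) - ∑ i ∈ S, (a i : ℝ)| := by
            have := Int.one_le_abs hDne
            calc (1 : ℝ) = ((1 : ℤ) : ℝ) := by norm_num
              _ ≤ ((|C - ∑ i ∈ S, a i| : ℤ) : ℝ) := by exact_mod_cast this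
              _ = |(C : ℝ) - ∑ i ∈ S, (a i : ℝ)| := by push_cast; ring_nf
          -- rewrite the sum over S
          have hsumS : ∑ i : Fin k, (a i : ℝ) * x (lo k i)
              = ∑ i ∈ S, (a i : ℝ) * x (lo k i) := by
            rw [hS_def]
            symm
            apply Finset.sum_filter_of_ne
            intro i _ hne hx0
            exact hne (by rw [hx0, mul_zero])
          set E : ℝ := ∑ i ∈ S, (a i : ℝ) * (1 - x (lo k i)) with hE_def
          have hEbound : |E| ≤ 1 / 4 := by
            calc |E| ≤ ∑ i ∈ S, |(a i : ℝ) * (1 - x (lo k i))| :=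
                  Finset.abs_sum_le_sum_abs _ _
              _ ≤ ∑ i ∈ S, |(a i : ℝ)| * ε := by
                  refine Finset.sum_le_sum fun i hi' => ?_
                  rw [abs_mul]
                  exact mul_le_mul_of_nonneg_left (hSnear i hi') (abs_nonneg _)
              _ = (∑ i ∈ S, |(a i : ℝ)|) * ε := by rw [Finset.sum_mul]
              _ ≤ A * ε := by
                  refine mul_le_mul_of_nonneg_right ?_ hεpos.le
                  exact Finset.sum_le_sum_of_subset_of_nonneg (Finset.subset_univ _)
                    (fun i _ _ => abs_nonneg _)
              _ = 1 / 4 := by rw [mul_comm]; exact hεA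
          have hdecomp : (C : ℝ) - ∑ i : Fin k, (a i : ℝ) * x (lo k i)
              = ((C : ℝ) - ∑ i ∈ S, (a i : ℝ)) + E := by
            rw [hsumS, hE_def]
            simp only [mul_sub, mul_one]
            rw [Finset.sum_sub_distrib]
            ring
          have hT1big : 1 / 4 ≤ ((C : ℝ) - ∑ i : Fin k, (a i : ℝ) * x (lo k i)) ^ 2 := by
            rw [hdecomp]
            set D : ℝ := (C : ℝ) - ∑ i ∈ S, (a i : ℝ)
            have h1 : |D| - |E| ≤ |D + E| := by
              have := abs_sub_abs_le_abs_sub D (-E)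
              simpa [sub_neg_eq_add] using this
            have h2 : (3 : ℝ) / 4 ≤ |D + E| := by linarith
            calc (1 : ℝ) / 4 ≤ (3 / 4 : ℝ) ^ 2 := by norm_num
              _ ≤ |D + E| ^ 2 := by nlinarith [abs_nonneg (D + E)]
              _ = (D + E) ^ 2 := sq_abs _
          unfold gzero
          linarith
  constructor
  · constructor
    · -- good subset ⇒ small value
      rintro ⟨S, hS⟩
      set x : Fin (2 * k) → ℝ := fun j => if h : j.1 < k then
          (if (⟨j.1, h⟩ : Fin k) ∈ S then 1 else 0)
        else (if (⟨j.1 - k, by have := j.2; omega⟩ : Fin k) ∈ S then 0 else 1) with hx_def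
      refine ⟨x, ?_⟩
      have hxlo : ∀ i : Fin k, x (lo k i) = if i ∈ S then (1 : ℝ) else 0 := by
        intro i
        show (if h : (lo k i).1 < k then _ else _) = _
        rw [dif_pos (show (lo k i).1 < k from i.2)]
        rfl
      have hxhi : ∀ i : Fin k, x (hi k i) = if i ∈ S then (0 : ℝ) else 1 := by
        intro i
        show (if h : (hi k i).1 < k then _ else _) = _
        rw [dif_neg (show ¬ (hi k i).1 < k by simp [hi])]
        have he : (⟨(hi k i).1 - k, by have := (hi k i).2; omega⟩ : Fin k) = i :=
          Fin.ext (by simp [hi])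
        rw [he]
      unfold gzero
      have h1 : ∑ i : Fin k, (a i : ℝ) * x (lo k i) = (C : ℝ) := by
        simp_rw [hxlo, mul_ite, mul_one, mul_zero]
        rw [Finset.sum_ite_mem, Finset.univ_inter]
        exact_mod_cast hS
      have h2 : ∑ i : Fin k, (1 - x (lo k i) - x (hi k i)) ^ 2 = 0 := by
        refine Finset.sum_eq_zero fun i _ => ?_
        rw [hxlo, hxhi]
        split <;> norm_num
      have h3 : ∑ i : Fin (2 * k), (if x i = 0 then (0 : ℝ) else 1) = k := by
        rw [sum_split_lo_hi k (fun i => if x i = 0 then (0 : ℝ) else 1),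
          ← Finset.sum_add_distrib]
        have he : ∀ i : Fin k, ((if x (lo k i) = 0 then (0 : ℝ) else 1) +
            (if x (hi k i) = 0 then (0 : ℝ) else 1)) = 1 := by
          intro i
          rw [hxlo, hxhi]
          by_cases hi' : i ∈ S <;> simp [hi']
        rw [Finset.sum_congr rfl fun i _ => he i]
        simp
      rw [h1, h2, h3]
      simp
    · -- small value ⇒ good subset
      rintro ⟨x, hx⟩
      by_contra hno
      have := key hno x
      linarith
  · exact key
end
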